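/- In any edge-coloring of a complete graph (on at least 2 vertices) containing no rainbow triangle, there exists a nontrivial partition of the vertex set into parts H_1,...,H_t (t ≥ 2) such that at most two colors appear on edges between distinct parts, and for each pair of distinct parts H_i, H_j, all edges between H_i and H_j receive the same color. -/

import Mathlib

open SimpleGraph Function

namespace GR

/-- The set of copies of a graph `H` (assumed without isolated vertices, so a copy is
identified with its edge set) inside the complete graph on `Fin n`. -/
def copies {α : Type} (H : SimpleGraph α) (n : ℕ) : Set (Set (Sym2 (Fin n))) :=
  {S | ∃ f : α → Fin n, Function.Injective f ∧ S = (Sym2.map f) '' H.edgeSet}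

/-- `S` is a monochromatic copy of `H` under the edge-coloring `c`. -/
def IsMonoCopy {α C : Type} (H : SimpleGraph α) {n : ℕ}
    (c : Sym2 (Fin n) → C) (S : Set (Sym2 (Fin n))) : Prop :=
  S ∈ copies H n ∧ ∃ col, ∀ e ∈ S, c e = col

/-- `S` is a rainbow copy of `G` under the edge-coloring `c`. -/
def IsRainbowCopy {α C : Type} (G : SimpleGraph α) {n : ℕ}
    (c : Sym2 (Fin n) → C) (S : Set (Sym2 (Fin n))) : Prop :=
  S ∈ copies G n ∧ Set.InjOn c S

def HasMonoCopy {α C : Type} (H : SimpleGraph α) {n : ℕ} (c : Sym2 (Fin n) → C) : Prop :=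
  ∃ S, IsMonoCopy H c S

def HasRainbowCopy {α C : Type} (G : SimpleGraph α) {n : ℕ} (c : Sym2 (Fin n) → C) : Prop :=
  ∃ S, IsRainbowCopy G c S

/-- The `k`-colored Gallai-Ramsey number `gr_k(G : H)`. -/
noncomputable def gr {α β : Type} (k : ℕ) (G : SimpleGraph α) (H : SimpleGraph β) : ℕ :=
  sInf {n | ∀ c : Sym2 (Fin n) → Fin k, HasRainbowCopy G c ∨ HasMonoCopy H c}

/-- The diagonal `k`-colored Ramsey number `r_k(H)`. -/
noncomputable def ramsey {β : Type} (k : ℕ) (H : SimpleGraph β) : ℕ :=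
  sInf {n | ∀ c : Sym2 (Fin n) → Fin k, HasMonoCopy H c}

/-- The matching with `n` edges, `nK₂`. -/
def nK2 (n : ℕ) : SimpleGraph (Fin n × Fin 2) :=
  SimpleGraph.fromRel (fun a b => a.1 = b.1)

/-- The path on 5 vertices. -/
def P5 : SimpleGraph (Fin 5) := SimpleGraph.pathGraph 5

/-- The star with three leaves. -/
def K13 : SimpleGraph (Fin 1 ⊕ Fin 3) := completeBipartiteGraph (Fin 1) (Fin 3)

/-- The triangle. -/
def K3 : SimpleGraph (Fin 3) := completeGraph (Fin 3)

/-- Number of monochromatic copies of `H` under the coloring `c`. -/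
noncomputable def monoCopyCount {α C : Type} (H : SimpleGraph α) {n : ℕ}
    (c : Sym2 (Fin n) → C) : ℕ :=
  Set.ncard {S | IsMonoCopy H c S}

/-- Number of rainbow copies of `G` under the coloring `c`. -/
noncomputable def rainbowCopyCount {α C : Type} (G : SimpleGraph α) {n : ℕ}
    (c : Sym2 (Fin n) → C) : ℕ :=
  Set.ncard {S | IsRainbowCopy G c S}

/-- The Gallai-Ramsey multiplicity: the minimum, over exact `k`-colorings of the complete
graph on `gr_k(G:H)` vertices, of the number of rainbow copies of `G` plus the number of
monochromatic copies of `H`. -/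
noncomputable def GM {α β : Type} (k : ℕ) (G : SimpleGraph α) (H : SimpleGraph β) : ℕ :=
  sInf {t | ∃ c : Sym2 (Fin (gr k G H)) → Fin k, Surjective c ∧
    t = rainbowCopyCount G c + monoCopyCount H c}

end GR

section GallaiAux

open Finset

variable {V C : Type} [Fintype V] [DecidableEq V]

/-- Step relation: an edge inside `t` whose color avoids both `r` and `b`. -/
private def Stp (c : Sym2 V → C) (t : Finset V) (r b : C) (u w : V) : Prop :=
  u ∈ t ∧ w ∈ t ∧ u ≠ w ∧ c s(u, w) ≠ r ∧ c s(u, w) ≠ b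

private abbrev GRel (c : Sym2 V → C) (t : Finset V) (r b : C) : V → V → Prop :=
  Relation.ReflTransGen (Stp c t r b)

private lemma stp_symm {c : Sym2 V → C} {t : Finset V} {r b : C} :
    Symmetric (Stp c t r b) := by
  rintro u w ⟨hu, hw, hne, h1, h2⟩
  exact ⟨hw, hu, hne.symm, by rwa [Sym2.eq_swap], by rwa [Sym2.eq_swap]⟩

private lemma rel_symm {c : Sym2 V → C} {t : Finset V} {r b : C} :
    Symmetric (GRel c t r b) :=
  fun _ _ h => by
    induction h with
    | refl => exact Relation.ReflTransGen.refl
    | tail _ hs ih => exact Relation.ReflTransGen.head (stp_symm hs) ih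

private lemma rel_trans {c : Sym2 V → C} {t : Finset V} {r b : C} {x y z : V} :
    GRel c t r b x y → GRel c t r b y z → GRel c t r b x z :=
  Relation.ReflTransGen.trans

private lemma ne_of_rel_not {c : Sym2 V → C} {t : Finset V} {r b : C} {x y : V}
    (h : ¬ GRel c t r b x y) : x ≠ y :=
  fun he => h (he ▸ Relation.ReflTransGen.refl)

private lemma cross_color {c : Sym2 V → C} {t : Finset V} {r b : C} {x y : V}
    (hx : x ∈ t) (hy : y ∈ t) (hxy : x ≠ y) (h : ¬ GRel c t r b x y) :
    c s(x, y) = r ∨ c s(x, y) = b := by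
  by_contra h'
  push_neg at h'
  exact h (Relation.ReflTransGen.single ⟨hx, hy, hxy, h'.1, h'.2⟩)

private lemma ne_of_mem_pair {x y r b : C} (hx : x ≠ r) (hx' : x ≠ b)
    (hy : y = r ∨ y = b) : x ≠ y :=
  fun h => hy.elim (fun h' => hx (h.trans h')) (fun h' => hx' (h.trans h'))

private lemma tri {c : Sym2 V → C}
    (hno : ¬ ∃ a b d : V, a ≠ b ∧ a ≠ d ∧ b ≠ d ∧
      c s(a, b) ≠ c s(a, d) ∧ c s(a, b) ≠ c s(b, d) ∧ c s(a, d) ≠ c s(b, d))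
    {a b d : V} (hab : a ≠ b) (had : a ≠ d) (hbd : b ≠ d) :
    c s(a, b) = c s(a, d) ∨ c s(a, b) = c s(b, d) ∨ c s(a, d) = c s(b, d) := by
  by_contra h
  push_neg at h
  exact hno ⟨a, b, d, hab, had, hbd, h.1, h.2.1, h.2.2⟩

/-- Along a `Rel`-path, the color towards any vertex not related to the start is constant. -/
private lemma rel_color {c : Sym2 V → C}
    (hno : ¬ ∃ a b d : V, a ≠ b ∧ a ≠ d ∧ b ≠ d ∧
      c s(a, b) ≠ c s(a, d) ∧ c s(a, b) ≠ c s(b, d) ∧ c s(a, d) ≠ c s(b, d))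
    {t : Finset V} {r b : C} {x x' y : V}
    (hxx' : GRel c t r b x x') (hy : y ∈ t) (hxy : ¬ GRel c t r b x y) :
    c s(x, y) = c s(x', y) := by
  induction hxx' with
  | refl => rfl
  | @tail a x'' hxa hstep ih =>
    have hay : ¬ GRel c t r b a y := fun h => hxy (rel_trans hxa h)
    have hx''y : ¬ GRel c t r b x'' y := fun h =>
      hxy (rel_trans hxa (rel_trans (Relation.ReflTransGen.single hstep) h))
    obtain ⟨ha, hx'', hax'', hg1, hg2⟩ := hstep
    have hay' : a ≠ y := ne_of_rel_not hay
    have hx''y' : x'' ≠ y := ne_of_rel_not hx''y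
    have c1 := cross_color ha hy hay' hay
    have c2 := cross_color hx'' hy hx''y' hx''y
    rcases tri hno hax'' hay' hx''y' with h | h | h
    · exact absurd h (ne_of_mem_pair hg1 hg2 c1)
    · exact absurd h (ne_of_mem_pair hg1 hg2 c2)
    · exact ih.trans h

private lemma rel_mem_S {c : Sym2 V → C} {t : Finset V} {r b : C} {S : Finset V}
    (hcut : ∀ x ∈ S, ∀ y ∈ t, y ∉ S → c s(x, y) = r ∨ c s(x, y) = b)
    {x y : V} (h : GRel c t r b x y) (hx : x ∈ S) : y ∈ S := by
  induction h with
  | refl => exact hx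
  | @tail a x'' hxa hstep ih =>
    by_contra hy
    rcases hcut a ih x'' hstep.2.1 hy with h | h
    · exact hstep.2.2.2.1 h
    · exact hstep.2.2.2.2 h

/-- The key cut lemma: there are two colors `r`, `b` and a nontrivial cut of `t`
all of whose boundary edges are colored `r` or `b`. -/
private lemma cut_lemma (c : Sym2 V → C)
    (hno : ¬ ∃ a b d : V, a ≠ b ∧ a ≠ d ∧ b ≠ d ∧
      c s(a, b) ≠ c s(a, d) ∧ c s(a, b) ≠ c s(b, d) ∧ c s(a, d) ≠ c s(b, d)) :
    ∀ (n : ℕ) (t : Finset V), t.card ≤ n → 2 ≤ t.card →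
    ∃ r b : C, ∃ S : Finset V, S ⊆ t ∧ S.Nonempty ∧ (t \ S).Nonempty ∧
      ∀ x ∈ S, ∀ y ∈ t, y ∉ S → c s(x, y) = r ∨ c s(x, y) = b := by
  intro n
  induction n with
  | zero => intro t hn h2; omega
  | succ n ih =>
    intro t hn h2
    classical
    by_cases h3 : t.card ≤ 2
    · -- base case : exactly two vertices
      have hc2 : t.card = 2 := le_antisymm h3 h2
      obtain ⟨a, b', hab, rfl⟩ := Finset.card_eq_two.mp hc2
      refine ⟨c s(a, b'), c s(a, b'), {a}, ?_, ⟨a, mem_singleton_self a⟩, ⟨b', ?_⟩, ?_⟩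
      · intro x hx
        rw [mem_singleton] at hx
        subst hx
        exact mem_insert_self _ _
      · simp [hab.symm, Ne.symm hab]
      · intro x hx y hy hyS
        rw [mem_singleton] at hx
        subst hx
        have : y = b' := by
          rcases mem_insert.mp hy with h | h
          · exact absurd (mem_singleton.mpr h) hyS
          · rwa [mem_singleton] at h
        subst this
        exact Or.inl rfl
    · -- main case
      push_neg at h3
      obtain ⟨v, hv⟩ : t.Nonempty := card_pos.mp (by omega)
      set t' := t.erase v with ht'
      have hvt' : v ∉ t' := notMem_erase _ _
      have ht'sub : t' ⊆ t := erase_subset _ _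
      have hcard' : t'.card = t.card - 1 := card_erase_of_mem hv
      have h2' : 2 ≤ t'.card := by omega
      obtain ⟨r, b, S₀, hS₀s, ⟨x0, hx0⟩, hy0', hcut0⟩ := ih t' (by omega) h2'
      obtain ⟨y0, hy0⟩ := hy0'
      have hx0s' : x0 ∈ t' := hS₀s hx0
      have hy0s' : y0 ∈ t' := (mem_sdiff.mp hy0).1
      have hnR0 : ¬ GRel c t' r b x0 y0 := fun h =>
        (mem_sdiff.mp hy0).2 (rel_mem_S hcut0 h hx0)
      have hvne : ∀ u ∈ t', v ≠ u := fun u hu h => hvt' (h ▸ hu)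
      set Vext := t'.filter (fun u => c s(v, u) ≠ r ∧ c s(v, u) ≠ b) with hVext
      by_cases hA : ∃ z ∈ t', ∀ u ∈ Vext, ¬ GRel c t' r b z u
      · -- some Rel-class of t' misses Vext : cut off v together with the classes meeting Vext
        obtain ⟨z, hz, hzA⟩ := hA
        refine ⟨r, b, insert v (t'.filter fun u => ∃ w ∈ Vext, GRel c t' r b w u),
          ?_, ⟨v, mem_insert_self _ _⟩, ⟨z, ?_⟩, ?_⟩
        · intro x hx
          rcases mem_insert.mp hx with rfl | hx
          · exact hv
          · exact ht'sub (mem_filter.mp hx).1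
        · refine mem_sdiff.mpr ⟨ht'sub hz, ?_⟩
          intro hmem
          rcases mem_insert.mp hmem with h | h
          · exact (ne_of_mem_erase hz) h
          · obtain ⟨_, w, hwV, hR⟩ := mem_filter.mp h
            exact hzA w hwV (rel_symm hR)
        · intro x hx y hy hyS
          have hyv : y ≠ v := fun h => hyS (h ▸ mem_insert_self _ _)
          have hys' : y ∈ t' := mem_erase.mpr ⟨hyv, hy⟩
          have hyF : ¬ ∃ w ∈ Vext, GRel c t' r b w y := fun hE =>
            hyS (mem_insert_of_mem (mem_filter.mpr ⟨hys', hE⟩))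
          rcases mem_insert.mp hx with rfl | hxF
          · have hyVext : y ∉ Vext := fun h => hyF ⟨y, h, Relation.ReflTransGen.refl⟩
            by_contra hcon
            push_neg at hcon
            exact hyVext (mem_filter.mpr ⟨hys', hcon.1, hcon.2⟩)
          · obtain ⟨hxs', w, hwV, hRwx⟩ := mem_filter.mp hxF
            have hnRxy : ¬ GRel c t' r b x y := fun h => hyF ⟨w, hwV, rel_trans hRwx h⟩
            exact cross_color hxs' hys' (ne_of_rel_not hnRxy) hnRxy
      · -- every Rel-class of t' meets Vext
        push_neg at hA
        obtain ⟨u1, hu1V, hRx0u1⟩ := hA x0 hx0s'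
        obtain ⟨u2, hu2V, hRy0u2⟩ := hA y0 hy0s'
        have hnRu : ¬ GRel c t' r b u1 u2 := fun h =>
          hnR0 (rel_trans hRx0u1 (rel_trans h (rel_symm hRy0u2)))
        have hu1s' : u1 ∈ t' := (mem_filter.mp hu1V).1
        have hu2s' : u2 ∈ t' := (mem_filter.mp hu2V).1
        have hg1 : c s(v, u1) ≠ r ∧ c s(v, u1) ≠ b := (mem_filter.mp hu1V).2
        have hg2 : c s(v, u2) ≠ r ∧ c s(v, u2) ≠ b := (mem_filter.mp hu2V).2
        set g := c s(v, u1) with hgdef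
        have hu12 : u1 ≠ u2 := ne_of_rel_not hnRu
        have hc12 := cross_color hu1s' hu2s' hu12 hnRu
        have hgu2 : c s(v, u2) = g := by
          rcases tri hno (hvne u1 hu1s') (hvne u2 hu2s') hu12 with h | h | h
          · exact h.symm
          · exact absurd h (ne_of_mem_pair hg1.1 hg1.2 hc12)
          · exact absurd h (ne_of_mem_pair hg2.1 hg2.2 hc12)
        have univ_g : ∀ u ∈ Vext, c s(v, u) = g := by
          intro u huV
          obtain ⟨hus', hgu⟩ := mem_filter.mp huV
          by_cases hR1 : GRel c t' r b u u1
          · have hnR2 : ¬ GRel c t' r b u u2 := fun h => hnRu (rel_trans (rel_symm hR1) h)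
            have hne2 : u ≠ u2 := ne_of_rel_not hnR2
            have hcu2 := cross_color hus' hu2s' hne2 hnR2
            rcases tri hno (hvne u hus') (hvne u2 hu2s') hne2 with h | h | h
            · rw [h, hgu2]
            · exact absurd h (ne_of_mem_pair hgu.1 hgu.2 hcu2)
            · exact absurd (hgu2 ▸ h) (ne_of_mem_pair hg1.1 hg1.2 hcu2)
          · have hne1 : u ≠ u1 := ne_of_rel_not hR1
            have hcu1 := cross_color hus' hu1s' hne1 hR1
            rcases tri hno (hvne u hus') (hvne u1 hu1s') hne1 with h | h | h
            · rw [h]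
            · exact absurd h (ne_of_mem_pair hgu.1 hgu.2 hcu1)
            · exact absurd h (ne_of_mem_pair hg1.1 hg1.2 hcu1)
        have mono_e : ∀ w ∈ t', (c s(v, w) = r ∨ c s(v, w) = b) →
            ∀ y ∈ t', ¬ GRel c t' r b w y → c s(w, y) = c s(v, w) := by
          intro w hws' hwe y hys' hnRwy
          obtain ⟨z', hz'V, hRyz'⟩ := hA y hys'
          have hz's' : z' ∈ t' := (mem_filter.mp hz'V).1
          have hgz' : c s(v, z') = g := univ_g z' hz'V
          have hnRz'w : ¬ GRel c t' r b z' w := fun h =>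
            hnRwy (rel_symm (rel_trans hRyz' h))
          have hz'w : z' ≠ w := ne_of_rel_not hnRz'w
          have hcz'w := cross_color hz's' hws' hz'w hnRz'w
          have hge : g ≠ c s(v, w) := ne_of_mem_pair hg1.1 hg1.2 hwe
          rcases tri hno (hvne z' hz's') (hvne w hws') hz'w with h | h | h
          · exact absurd (hgz' ▸ h) hge
          · exact absurd (hgz' ▸ h) (ne_of_mem_pair hg1.1 hg1.2 hcz'w)
          · have hcol := rel_color hno (rel_symm hRyz') hws' hnRz'w
            have : (s(w, y) : Sym2 V) = s(y, w) := Sym2.eq_swap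
            rw [this, ← hcol, ← h]
        by_cases hNV : ∀ u ∈ t', c s(v, u) ≠ r ∧ c s(v, u) ≠ b
        · -- all edges at v avoid r and b : they are all colored g, cut off v alone
          refine ⟨g, g, {v}, singleton_subset_iff.mpr hv, ⟨v, mem_singleton_self v⟩,
            ⟨u1, ?_⟩, ?_⟩
          · exact mem_sdiff.mpr ⟨ht'sub hu1s',
              by rw [mem_singleton]; exact ne_of_mem_erase hu1s'⟩
          · intro x hx y hy hyS
            rw [mem_singleton] at hx
            have hyv : y ≠ v := fun h => hyS (h ▸ mem_singleton_self _)
            have hys' : y ∈ t' := mem_erase.mpr ⟨hyv, hy⟩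
            rw [hx]
            exact Or.inl (univ_g y (mem_filter.mpr ⟨hys', hNV y hys'⟩))
        · push_neg at hNV
          obtain ⟨u₀, hu₀s', hu₀⟩ := hNV
          have he₀ : c s(v, u₀) = r ∨ c s(v, u₀) = b := or_iff_not_imp_left.mpr hu₀
          set e := c s(v, u₀) with hedef
          have single_e : ∀ u ∈ t', (c s(v, u) = r ∨ c s(v, u) = b) → c s(v, u) = e := by
            intro u hus' hue
            by_contra hne
            have huu₀ : u ≠ u₀ := fun h => hne (by rw [h])
            by_cases hR : GRel c t' r b u u₀
            · have hzex : ∃ z ∈ t', ¬ GRel c t' r b z u := by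
                by_cases h1 : GRel c t' r b x0 u
                · exact ⟨y0, hy0s', fun h => hnR0 (rel_trans h1 (rel_symm h))⟩
                · exact ⟨x0, hx0s', h1⟩
              obtain ⟨z, hzs', hnRzu⟩ := hzex
              have hnRuz : ¬ GRel c t' r b u z := fun h => hnRzu (rel_symm h)
              have hnRu₀z : ¬ GRel c t' r b u₀ z := fun h =>
                hnRuz (rel_trans hR h)
              have e1 := mono_e u hus' hue z hzs' hnRuz
              have e2 := mono_e u₀ hu₀s' he₀ z hzs' hnRu₀z
              have e3 := rel_color hno hR hzs' hnRuz
              exact hne (by rw [← e1, e3, e2])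
            · have e1 := mono_e u hus' hue u₀ hu₀s' hR
              have e2 := mono_e u₀ hu₀s' he₀ u hus' (fun h => hR (rel_symm h))
              have hsw : (s(u, u₀) : Sym2 V) = s(u₀, u) := Sym2.eq_swap
              exact hne (by rw [← e1, hsw, e2])
          refine ⟨g, e, insert v Vext, ?_, ⟨v, mem_insert_self _ _⟩, ⟨u₀, ?_⟩, ?_⟩
          · intro x hx
            rcases mem_insert.mp hx with rfl | hx
            · exact hv
            · exact ht'sub (mem_filter.mp hx).1
          · refine mem_sdiff.mpr ⟨ht'sub hu₀s', ?_⟩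
            intro hmem
            rcases mem_insert.mp hmem with h | h
            · exact (ne_of_mem_erase hu₀s') h
            · rcases he₀ with h' | h'
              · exact (mem_filter.mp h).2.1 h'
              · exact (mem_filter.mp h).2.2 h'
          · intro x hx y hy hyS
            have hyv : y ≠ v := fun h => hyS (h ▸ mem_insert_self _ _)
            have hys' : y ∈ t' := mem_erase.mpr ⟨hyv, hy⟩
            have hyV : y ∉ Vext := fun h => hyS (mem_insert_of_mem h)
            have hye : c s(v, y) = r ∨ c s(v, y) = b := by
              by_contra hc
              push_neg at hc
              exact hyV (mem_filter.mpr ⟨hys', hc⟩)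
            have hyeq : c s(v, y) = e := single_e y hys' hye
            rcases mem_insert.mp hx with rfl | hxV
            · exact Or.inr hyeq
            · have hxs' : x ∈ t' := (mem_filter.mp hxV).1
              have hxg : c s(v, x) = g := univ_g x hxV
              have hxy : x ≠ y := fun h => hyV (h ▸ hxV)
              rcases tri hno (hvne x hxs') (hvne y hys') hxy with h | h | h
              · exact absurd (hxg ▸ hyeq ▸ h) (ne_of_mem_pair hg1.1 hg1.2 he₀)
              · exact Or.inl (by rw [← h, hxg])
              · exact Or.inr (by rw [← h, hyeq])

end GallaiAux

open GR in
/-- Gallai's theorem: any rainbow-triangle-free coloring of a complete graph on at least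
two vertices admits a nontrivial Gallai partition. -/
theorem gallai_partition {V C : Type} [Fintype V] [DecidableEq V]
    (h2 : 2 ≤ Fintype.card V) (c : Sym2 V → C)
    (hno : ¬ ∃ a b d : V, a ≠ b ∧ a ≠ d ∧ b ≠ d ∧
      c s(a, b) ≠ c s(a, d) ∧ c s(a, b) ≠ c s(b, d) ∧ c s(a, d) ≠ c s(b, d)) :
    ∃ P : Finpartition (Finset.univ : Finset V),
      2 ≤ P.parts.card ∧
      Set.ncard {col | ∃ p ∈ P.parts, ∃ q ∈ P.parts, p ≠ q ∧
        ∃ x ∈ p, ∃ y ∈ q, c s(x, y) = col} ≤ 2 ∧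
      ∀ p ∈ P.parts, ∀ q ∈ P.parts, p ≠ q →
        ∀ x ∈ p, ∀ y ∈ q, ∀ x' ∈ p, ∀ y' ∈ q, c s(x, y) = c s(x', y') := by
  classical
  obtain ⟨r, b, S, hSsub, ⟨x0, hx0⟩, ⟨y0, hy0⟩, hcut⟩ :=
    cut_lemma c hno (Finset.univ.card) Finset.univ le_rfl
      (by rw [Finset.card_univ]; exact h2)
  set st : Setoid V := ⟨GRel c Finset.univ r b,
    ⟨fun _ => Relation.ReflTransGen.refl, fun h => rel_symm h, rel_trans⟩⟩ with hst
  set P := Finpartition.ofSetoid st with hP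
  have same_rel : ∀ {p : Finset V} {x y : V}, p ∈ P.parts → x ∈ p → y ∈ p →
      GRel c Finset.univ r b x y := by
    intro p x y hp hx hy
    have hpart : P.part x = p := Finpartition.part_eq_of_mem P hp hx
    rw [← hpart] at hy
    exact Finpartition.mem_part_ofSetoid_iff_rel.mp hy
  have diff_nrel : ∀ {p q : Finset V} {x y : V}, p ∈ P.parts → q ∈ P.parts → p ≠ q →
      x ∈ p → y ∈ q → ¬ GRel c Finset.univ r b x y := by
    intro p q x y hp hq hpq hx hy h
    have hyp : y ∈ P.part x := Finpartition.mem_part_ofSetoid_iff_rel.mpr h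
    rw [Finpartition.part_eq_of_mem P hp hx] at hyp
    exact hpq (P.eq_of_mem_parts hp hq hyp hy)
  refine ⟨P, ?_, ?_, ?_⟩
  · -- at least two parts
    have hy0' : y0 ∉ S := (Finset.mem_sdiff.mp hy0).2
    have hnrel : ¬ GRel c Finset.univ r b x0 y0 := fun h => hy0' (rel_mem_S hcut h hx0)
    have h1 : P.part x0 ∈ P.parts := P.part_mem.mpr (Finset.mem_univ _)
    have h2' : P.part y0 ∈ P.parts := P.part_mem.mpr (Finset.mem_univ _)
    have hne : P.part x0 ≠ P.part y0 := by
      intro h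
      exact hnrel (same_rel h1 (P.mem_part (Finset.mem_univ _))
        (h ▸ P.mem_part (Finset.mem_univ _)))
    exact Finset.one_lt_card.mpr ⟨_, h1, _, h2', hne⟩
  · -- at most two colors between parts
    have hsub : {col | ∃ p ∈ P.parts, ∃ q ∈ P.parts, p ≠ q ∧
        ∃ x ∈ p, ∃ y ∈ q, c s(x, y) = col} ⊆ {r, b} := by
      rintro col ⟨p, hp, q, hq, hpq, x, hx, y, hy, rfl⟩
      have hnrel := diff_nrel hp hq hpq hx hy
      rcases cross_color (Finset.mem_univ x) (Finset.mem_univ y)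
        (ne_of_rel_not hnrel) hnrel with h | h
      · exact Or.inl h
      · exact Or.inr h
    calc Set.ncard {col | ∃ p ∈ P.parts, ∃ q ∈ P.parts, p ≠ q ∧
          ∃ x ∈ p, ∃ y ∈ q, c s(x, y) = col}
        ≤ Set.ncard ({r, b} : Set C) := Set.ncard_le_ncard hsub (Set.toFinite _)
      _ ≤ 2 := (Set.ncard_insert_le _ _).trans (by simp)
  · -- between two parts all edges have the same color
    intro p hp q hq hpq x hx y hy x' hx' y' hy'
    have hxx' := same_rel hp hx hx'
    have hyy' := same_rel hq hy hy'
    have h1 : ¬ GRel c Finset.univ r b x y := diff_nrel hp hq hpq hx hy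
    have h2' : ¬ GRel c Finset.univ r b y x' := diff_nrel hq hp hpq.symm hy hx'
    have e1 : c s(x, y) = c s(x', y) :=
      rel_color hno hxx' (Finset.mem_univ y) h1
    have e2 : c s(y, x') = c s(y', x') :=
      rel_color hno hyy' (Finset.mem_univ x') h2'
    calc c s(x, y) = c s(x', y) := e1
      _ = c s(y, x') := by rw [Sym2.eq_swap]
      _ = c s(y', x') := e2
      _ = c s(x', y') := by rw [Sym2.eq_swap]
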